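/- arXiv:2006.15978 — 3 statements merged into one kernel-verified Lean document; each statement's English description precedes it below -/
import Mathlib

section
/- Let G be a finite p-group and F a field of characteristic p. Up to isomorphism, there is a unique cyclic F G-module of dimension |G| - 1 over F; it is isomorphic to F G / (N), where N = Σ_{g∈G} g is the norm element, and it fits into a short exact sequence 0 → F → F G → M → 0 where F → F G sends 1 to N. -/
/-- The norm element `N = ∑_{g ∈ G} g` of the group algebra. -/
noncomputable def normElem (F : Type) (G : Type) [Field F] [Group G] [Fintype G] :
    MonoidAlgebra F G :=
  ∑ g : G, MonoidAlgebra.of F G g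

section Aux

set_option linter.unusedSectionVars false

variable (p : ℕ) [Fact p.Prime] (F : Type) [Field F] [CharP F p]
variable (G : Type) [Group G] [Fintype G]

lemma normElem_apply (h : G) : (normElem F G).coeff h = 1 := by
  classical
  rw [normElem, MonoidAlgebra.coeff_sum, Finsupp.finset_sum_apply]
  simp [MonoidAlgebra.of_apply, MonoidAlgebra.coeff_single, Finsupp.single_apply]

lemma normElem_ne_zero : normElem F G ≠ 0 := by
  intro h
  have := normElem_apply F G 1
  rw [h] at this
  simp at this

lemma single_mul_normElem (g : G) :
    MonoidAlgebra.of F G g * normElem F G = normElem F G := by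
  classical
  rw [normElem, Finset.mul_sum]
  refine Fintype.sum_equiv (Equiv.mulLeft g) _ _ fun h => ?_
  rw [← map_mul]
  rfl

lemma mul_normElem_mem (x : MonoidAlgebra F G) :
    x * normElem F G ∈ Submodule.span F {normElem F G} := by
  classical
  induction x using MonoidAlgebra.induction with
  | zero => simp
  | single_add a b f _ _ ih =>
    rw [add_mul]
    refine Submodule.add_mem _ ?_ ih
    have : (MonoidAlgebra.single a b : MonoidAlgebra F G) = b • MonoidAlgebra.of F G a := by
      rw [MonoidAlgebra.of_apply, MonoidAlgebra.smul_single', mul_one]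
    rw [this, smul_mul_assoc, single_mul_normElem]
    exact Submodule.smul_mem _ _ (Submodule.mem_span_singleton_self _)

lemma span_restrict :
    (Submodule.span (MonoidAlgebra F G) {normElem F G}).restrictScalars F
      = Submodule.span F {normElem F G} := by
  apply le_antisymm
  · intro y hy
    rw [Submodule.restrictScalars_mem, Submodule.mem_span_singleton] at hy
    obtain ⟨x, rfl⟩ := hy
    rw [smul_eq_mul]
    exact mul_normElem_mem F G x
  · rw [Submodule.span_le]
    intro y hy
    rw [Set.mem_singleton_iff] at hy
    subst hy
    exact Submodule.mem_span_singleton_self _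

lemma invariant_eq_smul_normElem (v : MonoidAlgebra F G)
    (hv : ∀ g : G, MonoidAlgebra.of F G g * v = v) :
    v = v.coeff 1 • normElem F G := by
  classical
  apply MonoidAlgebra.coeff_injective; ext h
  have := congrArg (fun x : MonoidAlgebra F G => x.coeff h) (hv h)
  simp only [MonoidAlgebra.of_apply, MonoidAlgebra.coeff_single_mul_apply, one_mul,
    inv_mul_cancel] at this
  rw [MonoidAlgebra.coeff_smul, Finsupp.smul_apply, normElem_apply, smul_eq_mul, mul_one, this]

lemma char_pow_eq_one {c : F} {n : ℕ} (h : c ^ p ^ n = 1) : c = 1 := by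
  have hp : (0:ℕ) < p ^ n := pow_pos (Fact.out (p := p.Prime)).pos n
  have h0 : (c - 1) ^ p ^ n = 0 := by
    rw [sub_pow_char_pow, h, one_pow, sub_self]
  exact sub_eq_zero.mp (pow_eq_zero_iff hp.ne' |>.mp h0)

lemma finrank_FG : Module.finrank F (MonoidAlgebra F G) = Fintype.card G := by
  exact (MonoidAlgebra.coeffLinearEquiv F).finrank_eq.trans (Module.finrank_finsupp_self F (ι := G))

instance : Module.Finite F (MonoidAlgebra F G) :=
  Module.Finite.equiv (MonoidAlgebra.coeffLinearEquiv F).symm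

lemma smul_inj : Function.Injective (fun c : F => c • normElem F G) := by
  intro a b hab
  have h : (a - b) • normElem F G = 0 := by
    simp only at hab
    rw [sub_smul, hab, sub_self]
  rcases smul_eq_zero.mp h with h | h
  · exact sub_eq_zero.mp h
  · exact absurd h (normElem_ne_zero F G)

lemma finrank_quot :
    Module.finrank F (MonoidAlgebra F G ⧸ Submodule.span (MonoidAlgebra F G) {normElem F G})
      = Fintype.card G - 1 := by
  have e := Submodule.Quotient.restrictScalarsEquiv F
    (Submodule.span (MonoidAlgebra F G) {normElem F G})
  rw [← e.finrank_eq]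
  have h1 : Module.finrank F
      ((Submodule.span (MonoidAlgebra F G) {normElem F G}).restrictScalars F) = 1 := by
    rw [span_restrict, finrank_span_singleton (normElem_ne_zero F G)]
  have h2 := Submodule.finrank_quotient_add_finrank
    ((Submodule.span (MonoidAlgebra F G) {normElem F G}).restrictScalars F)
  rw [h1, finrank_FG] at h2
  omega

lemma quot_cyclic :
    ∃ m : (MonoidAlgebra F G ⧸ Submodule.span (MonoidAlgebra F G) {normElem F G}),
      Submodule.span (MonoidAlgebra F G) {m} = ⊤ := by
  refine ⟨Submodule.Quotient.mk 1, ?_⟩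
  have h : ({Submodule.Quotient.mk 1} : Set _) =
      (Submodule.span (MonoidAlgebra F G) {normElem F G}).mkQ '' {1} := by simp
  have hsp : Submodule.span (MonoidAlgebra F G) ({1} : Set (MonoidAlgebra F G)) = ⊤ := by
    rw [eq_top_iff]; intro x _
    exact Submodule.mem_span_singleton.mpr ⟨x, by simp⟩
  rw [h, ← Submodule.map_span, hsp, Submodule.map_top, Submodule.range_mkQ]

lemma uniqueness (hG : IsPGroup p G)
    (M : Type) [AddCommGroup M] [Module F M] [Module (MonoidAlgebra F G) M]
    [IsScalarTower F (MonoidAlgebra F G) M]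
    (hcyc : ∃ m : M, Submodule.span (MonoidAlgebra F G) {m} = ⊤)
    (hdim : Module.finrank F M = Fintype.card G - 1) :
    Nonempty (M ≃ₗ[MonoidAlgebra F G]
      (MonoidAlgebra F G ⧸ Submodule.span (MonoidAlgebra F G) {normElem F G})) := by
  classical
  obtain ⟨m, hm⟩ := hcyc
  set φ : MonoidAlgebra F G →ₗ[MonoidAlgebra F G] M :=
    LinearMap.toSpanSingleton (MonoidAlgebra F G) M m with hφ
  have hsurj : Function.Surjective φ := by
    rw [← LinearMap.range_eq_top, hφ, ← LinearMap.span_singleton_eq_range]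
    exact hm
  set K := LinearMap.ker φ with hK
  set Kr := K.restrictScalars F with hKr
  have hMfin : Module.Finite F M :=
    Module.Finite.of_surjective (φ.restrictScalars F) hsurj
  -- rank-nullity
  have hrn := LinearMap.finrank_range_add_finrank_ker (φ.restrictScalars F)
  have hrange : LinearMap.range (φ.restrictScalars F) = ⊤ := by
    rw [LinearMap.range_eq_top]; exact hsurj
  rw [hrange, finrank_top, hdim, finrank_FG] at hrn
  have hker : LinearMap.ker (φ.restrictScalars F) = Kr := by
    rw [hKr, hK, LinearMap.ker_restrictScalars]
  rw [hker] at hrn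
  have hcard : 0 < Fintype.card G := Fintype.card_pos
  have hKr1 : Module.finrank F Kr = 1 := by omega
  -- pick a nonzero element of the kernel
  have hKrne : Kr ≠ ⊥ := by
    intro h
    rw [h, finrank_bot] at hKr1
    omega
  obtain ⟨v, hvK, hv0⟩ := Submodule.exists_mem_ne_zero_of_ne_bot hKrne
  have hspanKr : Submodule.span F {v} = Kr := by
    apply Submodule.eq_of_le_of_finrank_eq
    · rw [Submodule.span_le, Set.singleton_subset_iff]; exact hvK
    · rw [finrank_span_singleton hv0, hKr1]
  -- invariance of v
  have hinv : ∀ g : G, MonoidAlgebra.of F G g * v = v := by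
    intro g
    have hmem : MonoidAlgebra.of F G g * v ∈ Kr := by
      rw [hKr]
      exact Submodule.smul_mem K (MonoidAlgebra.of F G g) hvK
    rw [← hspanKr, Submodule.mem_span_singleton] at hmem
    obtain ⟨c, hc⟩ := hmem
    have hpow : ∀ n : ℕ, MonoidAlgebra.of F G (g ^ n) * v = c ^ n • v := by
      intro n
      induction n with
      | zero =>
        simp only [pow_zero, one_smul]
        rw [show MonoidAlgebra.of F G (1:G) = 1 from map_one _, one_mul]
      | succ n ih =>
        rw [pow_succ, map_mul, mul_assoc, ← hc, mul_smul_comm, ih, smul_smul,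
          mul_comm, ← pow_succ]
    obtain ⟨k, hk⟩ := hG g
    have := hpow (p ^ k)
    rw [hk, map_one, one_mul] at this
    have hc1 : c ^ p ^ k = 1 := by
      by_contra hne
      have : (c ^ p ^ k - 1) • v = 0 := by
        rw [sub_smul, ← this, one_smul, sub_self]
      rcases smul_eq_zero.mp this with h | h
      · exact hne (sub_eq_zero.mp h)
      · exact hv0 h
    rw [← hc, char_pow_eq_one p F hc1, one_smul]
  -- v is a multiple of the norm element
  have hvN := invariant_eq_smul_normElem F G v hinv
  have hv1 : v.coeff 1 ≠ 0 := by
    intro h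
    rw [h, zero_smul] at hvN
    exact hv0 hvN
  have hKsp : K = Submodule.span (MonoidAlgebra F G) {normElem F G} := by
    apply Submodule.restrictScalars_injective F
    rw [← hKr, ← hspanKr, span_restrict, hvN,
      Submodule.span_singleton_smul_eq (IsUnit.mk0 _ hv1)]
  have e1 : (MonoidAlgebra F G ⧸ K) ≃ₗ[MonoidAlgebra F G] M :=
    φ.quotKerEquivOfSurjective hsurj
  have e2 := Submodule.quotEquivOfEq K _ hKsp
  exact ⟨e1.symm.trans e2⟩

end Aux

/-- Over a field `F` of characteristic `p` and a finite `p`-group `G`, there is a unique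
cyclic `F G`-module of dimension `|G| - 1`: any such module is isomorphic to `F G/(N)`,
which is itself cyclic of dimension `|G| - 1`, and it fits into the short exact sequence
`0 → F → F G → F G/(N) → 0` where `F → F G` sends `1` to the norm `N`. -/
theorem stmt4 (p : ℕ) [Fact p.Prime] (F : Type) [Field F] [CharP F p]
    (G : Type) [Group G] [Fintype G] (hG : IsPGroup p G) :
    (∀ (M : Type) [AddCommGroup M] [Module F M] [Module (MonoidAlgebra F G) M]
        [IsScalarTower F (MonoidAlgebra F G) M],
      (∃ m : M, Submodule.span (MonoidAlgebra F G) {m} = ⊤) →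
      Module.finrank F M = Fintype.card G - 1 →
      Nonempty (M ≃ₗ[MonoidAlgebra F G]
        (MonoidAlgebra F G ⧸ Submodule.span (MonoidAlgebra F G) {normElem F G}))) ∧
    (∃ m : (MonoidAlgebra F G ⧸ Submodule.span (MonoidAlgebra F G) {normElem F G}),
      Submodule.span (MonoidAlgebra F G) {m} = ⊤) ∧
    Module.finrank F (MonoidAlgebra F G ⧸ Submodule.span (MonoidAlgebra F G) {normElem F G})
      = Fintype.card G - 1 ∧
    Function.Injective (fun c : F => c • normElem F G) ∧
    (Submodule.span (MonoidAlgebra F G) {normElem F G}).restrictScalars F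
      = Submodule.span F {normElem F G} := by
  exact ⟨fun M _ _ _ _ hcyc hdim => uniqueness p F G hG M hcyc hdim,
    quot_cyclic F G, finrank_quot F G, smul_inj F G, span_restrict F G⟩
end

section
/- Let G be a group, let Φ²(G) denote the subgroup generated by p-th powers and commutators of elements of the commutator subgroup mixed with G so that Φ(G)/Φ²(G) is an abelian group of exponent p on which G acts by conjugation through G/Φ(G). Then for x, y, z ∈ G, in the F_p[G/Φ(G)]-module Φ(G)/Φ²(G) (written additively) the Jacobi-type relation holds: (y,x)·Z + (x,z)·Y + (z,y)·X = 0, where X = x - 1, Y = y - 1, Z = z - 1 act via the group algebra. -/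
/-- The commutator `(a,b) = a⁻¹b⁻¹ab`. -/
def cmt {G : Type*} [Group G] (a b : G) : G := a⁻¹ * b⁻¹ * a * b

/-- Conjugation `a^b = b⁻¹ab`. -/
def cnj {G : Type*} [Group G] (a b : G) : G := b⁻¹ * a * b

/-- The Frattini-type subgroup `Φ(G) = G^p (G,G)`: the subgroup generated by `p`-th powers
and commutators. -/
def phiSub (p : ℕ) (G : Type*) [Group G] : Subgroup G :=
  Subgroup.closure ({x | ∃ g : G, x = g ^ p} ∪ {x | ∃ a b : G, x = cmt a b})

/-- `Φ²(G) = Φ(Φ(G))`, viewed as a subgroup of `G`. -/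
def phi2Sub (p : ℕ) (G : Type*) [Group G] : Subgroup G :=
  (phiSub p ↥(phiSub p G)).map (phiSub p G).subtype

section Aux

variable {G : Type*} [Group G]

lemma cmt_mem_phiSub (p : ℕ) (a b : G) : cmt a b ∈ phiSub p G :=
  Subgroup.subset_closure (Or.inr ⟨a, b, rfl⟩)

lemma phiSub_normal (p : ℕ) : (phiSub p G).Normal := by
  constructor
  intro n hn g
  induction hn using Subgroup.closure_induction with
  | mem x hx =>
    rcases hx with ⟨h, rfl⟩ | ⟨a, b, rfl⟩
    · exact Subgroup.subset_closure (Or.inl ⟨g * h * g⁻¹, by rw [← conj_pow]⟩)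
    · refine Subgroup.subset_closure (Or.inr ⟨g * a * g⁻¹, g * b * g⁻¹, ?_⟩)
      unfold cmt; group
  | one => simpa using (phiSub p G).one_mem
  | mul x y _ _ hx hy =>
    have : g * (x * y) * g⁻¹ = (g * x * g⁻¹) * (g * y * g⁻¹) := by group
    rw [this]; exact (phiSub p G).mul_mem hx hy
  | inv x _ hx =>
    have : g * x⁻¹ * g⁻¹ = (g * x * g⁻¹)⁻¹ := by group
    rw [this]; exact (phiSub p G).inv_mem hx

/-- If an element commutes with `d`, conjugation by `d` fixes it. -/
lemma cnj_of_commute {a d : G} (h : Commute a d) : cnj a d = a := by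
  unfold cnj
  rw [mul_assoc, h.eq, ← mul_assoc, inv_mul_cancel, one_mul]

/-- The key identity: in a group where any two commutators commute,
`(a,b)^c (a,b)⁻¹` equals the conjugate by `a` of `((b,a⁻¹), c)`. -/
lemma key_identity {Q : Type*} [Group Q]
    (h : ∀ a b c d : Q, Commute (cmt a b) (cmt c d)) (a b c : Q) :
    cnj (cmt a b) c * (cmt a b)⁻¹ = cnj (cmt (cmt b a⁻¹) c) a := by
  have step1 : cnj (cmt (cmt b a⁻¹) c) a
      = cmt b a * (cnj (cnj (cmt b a) c) (cmt c a))⁻¹ := by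
    unfold cmt cnj; group
  have step2 : cnj (cnj (cmt b a) c) (cmt c a) = cnj (cmt b a) c := by
    have e : cnj (cmt b a) c = cmt (cnj b c) (cnj a c) := by unfold cmt cnj; group
    rw [e]
    exact cnj_of_commute (h _ _ _ _)
  rw [step1, step2]
  have e2 : cnj (cmt b a) c = cmt (cnj b c) (cnj a c) := by unfold cmt cnj; group
  have hc : Commute (cmt b a) (cnj (cmt b a) c) := by rw [e2]; exact h _ _ _ _
  have : cnj (cmt a b) c * (cmt a b)⁻¹ = (cnj (cmt b a) c)⁻¹ * cmt b a := by
    unfold cmt cnj; group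
  rw [this, (hc.inv_right).eq]

/-- Jacobi-type identity in any group where all commutators commute pairwise. -/
lemma jacobi {Q : Type*} [Group Q]
    (h : ∀ a b c d : Q, Commute (cmt a b) (cmt c d)) (x y z : Q) :
    (cnj (cmt y x) z * (cmt y x)⁻¹) * (cnj (cmt x z) y * (cmt x z)⁻¹) *
      (cnj (cmt z y) x * (cmt z y)⁻¹) = 1 := by
  rw [key_identity h y x z, key_identity h x z y, key_identity h z y x]
  -- These are the three Hall–Witt factors, appearing in the order HW1 * HW3 * HW2.
  have cf : ∀ (u v : Q) (g : Q), cnj (cmt u v) g = cmt (cnj u g) (cnj v g) := by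
    intro u v g; unfold cmt cnj; group
  have hcomm : Commute (cnj (cmt (cmt z x⁻¹) y) x) (cnj (cmt (cmt y z⁻¹) x) z) := by
    have e1 : cnj (cmt (cmt z x⁻¹) y) x = cmt (cnj (cmt z x⁻¹) x) (cnj y x) := cf _ _ _
    have e2 : cnj (cmt (cmt y z⁻¹) x) z = cmt (cnj (cmt y z⁻¹) z) (cnj x z) := cf _ _ _
    rw [e1, e2]; exact h _ _ _ _
  rw [mul_assoc, hcomm.eq, ← mul_assoc]
  -- Now it is exactly the Hall–Witt identity, a free-group identity.
  unfold cmt cnj; group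

end Aux

open scoped commutatorElement

/-- The Jacobi-type relation `(y,x)·Z + (x,z)·Y + (z,y)·X = 0` in the
`𝔽_p[G/Φ(G)]`-module `Φ(G)/Φ²(G)`, written multiplicatively: the class of
`(y,x)^z (y,x)⁻¹ · (x,z)^y (x,z)⁻¹ · (z,y)^x (z,y)⁻¹` modulo `Φ²(G)` is trivial. -/
theorem stmt10 (p : ℕ) [Fact p.Prime] {G : Type*} [Group G] (x y z : G) :
    (cnj (cmt y x) z * (cmt y x)⁻¹) * (cnj (cmt x z) y * (cmt x z)⁻¹) *
      (cnj (cmt z y) x * (cmt z y)⁻¹) ∈ phi2Sub p G := by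
  set K : Subgroup G := phiSub p G with hK
  haveI : K.Normal := phiSub_normal p
  haveI : (⁅K, K⁆ : Subgroup G).Normal := Subgroup.commutator_normal K K
  set N : Subgroup G := ⁅K, K⁆ with hN
  -- Step 1: N ≤ phi2Sub p G
  have hNle : N ≤ phi2Sub p G := by
    rw [hN, Subgroup.commutator_le]
    intro g₁ hg₁ g₂ hg₂
    refine ⟨⁅(⟨g₁, hg₁⟩ : K), (⟨g₂, hg₂⟩ : K)⁆, ?_, rfl⟩
    have : ⁅(⟨g₁, hg₁⟩ : K), (⟨g₂, hg₂⟩ : K)⁆ = cmt (⟨g₁, hg₁⟩ : K)⁻¹ (⟨g₂, hg₂⟩ : K)⁻¹ := by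
      unfold cmt; rw [commutatorElement_def]; group
    rw [this]
    exact cmt_mem_phiSub p _ _
  -- Step 2: work in the quotient G ⧸ N
  let π : G →* G ⧸ N := QuotientGroup.mk' N
  have hcq : ∀ a b c d : G ⧸ N, Commute (cmt a b) (cmt c d) := by
    intro a b c d
    obtain ⟨a, rfl⟩ := QuotientGroup.mk'_surjective N a
    obtain ⟨b, rfl⟩ := QuotientGroup.mk'_surjective N b
    obtain ⟨c, rfl⟩ := QuotientGroup.mk'_surjective N c
    obtain ⟨d, rfl⟩ := QuotientGroup.mk'_surjective N d
    have h1 : cmt (π a) (π b) = π (cmt a b) := by unfold cmt; simp [map_mul]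
    have h2 : cmt (π c) (π d) = π (cmt c d) := by unfold cmt; simp [map_mul]
    rw [← commutatorElement_eq_one_iff_commute, h1, h2]
    have : ⁅π (cmt a b), π (cmt c d)⁆ = π ⁅cmt a b, cmt c d⁆ := by
      rw [commutatorElement_def, commutatorElement_def]; simp [map_mul]
    rw [this, ← MonoidHom.mem_ker, QuotientGroup.ker_mk']
    exact Subgroup.commutator_mem_commutator (cmt_mem_phiSub p a b) (cmt_mem_phiSub p c d)
  -- Step 3: apply the jacobi lemma
  have hπ : ∀ (a b g : G), π (cnj (cmt a b) g * (cmt a b)⁻¹)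
      = cnj (cmt (π a) (π b)) (π g) * (cmt (π a) (π b))⁻¹ := by
    intro a b g; unfold cmt cnj; simp [map_mul]
  have hw : π ((cnj (cmt y x) z * (cmt y x)⁻¹) * (cnj (cmt x z) y * (cmt x z)⁻¹) *
      (cnj (cmt z y) x * (cmt z y)⁻¹)) = 1 := by
    rw [map_mul, map_mul, hπ, hπ, hπ]
    exact jacobi hcq (π x) (π y) (π z)
  have : (cnj (cmt y x) z * (cmt y x)⁻¹) * (cnj (cmt x z) y * (cmt x z)⁻¹) *
      (cnj (cmt z y) x * (cmt z y)⁻¹) ∈ N := by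
    rw [← QuotientGroup.ker_mk' N]
    exact hw
  exact hNle this
end

section
/- As a consequence of the relations y^p·X = (x,y)·Y^{p-1} and x^p·Y = -(x,y)·X^{p-1} in the module M = Φ(G)/Φ²(G), one has (x, y)·X^{p-1}·Y^{p-1} = 0 in M for any x, y ∈ G. -/
/-- The coefficient of `t^i` in the expansion of `(t-1)^{p-1}` over `ℤ`. -/
def sgnBinom (p i : ℕ) : ℤ := (-1) ^ (p - 1 - i) * (Nat.choose (p - 1) i : ℤ)

namespace Stmt12Aux

variable {G : Type*} [Group G]

theorem map_cmt {H : Type*} [Group H] (f : G →* H) (a b : G) :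
    f (cmt a b) = cmt (f a) (f b) := by simp [cmt]

theorem mem_phi_pow (p : ℕ) (g : G) : g ^ p ∈ phiSub p G :=
  Subgroup.subset_closure (Or.inl ⟨g, rfl⟩)

theorem mem_phi_cmt (p : ℕ) (a b : G) : cmt a b ∈ phiSub p G :=
  Subgroup.subset_closure (Or.inr ⟨a, b, rfl⟩)

instance phiNormal (p : ℕ) : (phiSub p G).Normal := by
  constructor
  intro n hn g
  have key : (phiSub p G).map (MulAut.conj g).toMonoidHom ≤ phiSub p G := by
    unfold phiSub
    rw [MonoidHom.map_closure]
    refine Subgroup.closure_mono ?_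
    rintro z ⟨w, hw, rfl⟩
    rcases hw with ⟨a, rfl⟩ | ⟨a, b, rfl⟩
    · exact Or.inl ⟨(MulAut.conj g).toMonoidHom a, map_pow _ a p⟩
    · exact Or.inr ⟨_, _, map_cmt (MulAut.conj g).toMonoidHom a b⟩
  exact key ⟨n, hn, rfl⟩

def phi2Gens (p : ℕ) (G : Type*) [Group G] : Set G :=
  {z | ∃ a ∈ phiSub p G, z = a ^ p} ∪ {z | ∃ a ∈ phiSub p G, ∃ b ∈ phiSub p G, z = cmt a b}

theorem phi2_eq (p : ℕ) : phi2Sub p G = Subgroup.closure (phi2Gens p G) := by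
  have h0 : phi2Sub p G = Subgroup.map (phiSub p G).subtype
      (Subgroup.closure (({x | ∃ g, x = g ^ p} ∪ {x | ∃ a b, x = cmt a b}) :
        Set ↥(phiSub p G))) := rfl
  rw [h0, MonoidHom.map_closure]
  congr 1
  rw [Set.image_union]
  unfold phi2Gens
  congr 1
  · ext z
    constructor
    · rintro ⟨w, ⟨a, rfl⟩, rfl⟩
      exact ⟨(a : G), a.2, by simp⟩
    · rintro ⟨a, ha, rfl⟩
      exact ⟨⟨a, ha⟩ ^ p, ⟨⟨a, ha⟩, rfl⟩, by simp⟩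
  · ext z
    constructor
    · rintro ⟨w, ⟨a, b, rfl⟩, rfl⟩
      exact ⟨(a : G), a.2, (b : G), b.2, by rw [map_cmt]; rfl⟩
    · rintro ⟨a, ha, b, hb, rfl⟩
      exact ⟨cmt ⟨a, ha⟩ ⟨b, hb⟩, ⟨_, _, rfl⟩, by rw [map_cmt]; rfl⟩

instance phi2Normal (p : ℕ) : (phi2Sub p G).Normal := by
  constructor
  intro n hn g
  rw [phi2_eq] at hn ⊢
  have key : (Subgroup.closure (phi2Gens p G)).map (MulAut.conj g).toMonoidHom ≤
      Subgroup.closure (phi2Gens p G) := by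
    rw [MonoidHom.map_closure]
    refine Subgroup.closure_mono ?_
    rintro z ⟨w, hw, rfl⟩
    rcases hw with ⟨a, ha, rfl⟩ | ⟨a, ha, b, hb, rfl⟩
    · exact Or.inl ⟨(MulAut.conj g).toMonoidHom a,
        (phiNormal p).conj_mem a ha g, map_pow _ a p⟩
    · exact Or.inr ⟨(MulAut.conj g).toMonoidHom a, (phiNormal p).conj_mem a ha g,
        (MulAut.conj g).toMonoidHom b, (phiNormal p).conj_mem b hb g,
        map_cmt (MulAut.conj g).toMonoidHom a b⟩
  exact key ⟨n, hn, rfl⟩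

theorem mem_phi2_pow (p : ℕ) {g : G} (hg : g ∈ phiSub p G) : g ^ p ∈ phi2Sub p G := by
  rw [phi2_eq]
  exact Subgroup.subset_closure (Or.inl ⟨g, hg, rfl⟩)

theorem mem_phi2_cmt (p : ℕ) {a b : G} (ha : a ∈ phiSub p G) (hb : b ∈ phiSub p G) :
    cmt a b ∈ phi2Sub p G := by
  rw [phi2_eq]
  exact Subgroup.subset_closure (Or.inr ⟨a, ha, b, hb, rfl⟩)

end Stmt12Aux
namespace Stmt12Aux

variable {G : Type*} [Group G]

def pQ (p : ℕ) (G : Type*) [Group G] : G →* G ⧸ phi2Sub p G := QuotientGroup.mk' _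

def Msub (p : ℕ) (G : Type*) [Group G] : Subgroup (G ⧸ phi2Sub p G) :=
  (phiSub p G).map (pQ p G)

theorem pQ_comm {p : ℕ} {a b : G} (ha : a ∈ phiSub p G) (hb : b ∈ phiSub p G) :
    pQ p G a * pQ p G b = pQ p G b * pQ p G a := by
  have h : (pQ p G a)⁻¹ * (pQ p G b)⁻¹ * pQ p G a * pQ p G b = 1 := by
    have := (QuotientGroup.eq_one_iff (cmt a b)).2 (mem_phi2_cmt p ha hb)
    simpa [cmt, map_mul, map_inv, pQ] using this
  calc pQ p G a * pQ p G b
      = pQ p G b * pQ p G a * ((pQ p G a)⁻¹ * (pQ p G b)⁻¹ * pQ p G a * pQ p G b) := by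
        group
    _ = pQ p G b * pQ p G a := by rw [h, mul_one]

theorem pQ_pow {p : ℕ} {a : G} (ha : a ∈ phiSub p G) : (pQ p G a) ^ p = 1 := by
  rw [← map_pow]
  exact (QuotientGroup.eq_one_iff _).2 (mem_phi2_pow p ha)

theorem pQ_conj {p : ℕ} {h a : G} (hh : h ∈ phiSub p G) (ha : a ∈ phiSub p G) :
    pQ p G (h⁻¹ * a * h) = pQ p G a := by
  have h1 : pQ p G (cmt h a⁻¹) = 1 :=
    (QuotientGroup.eq_one_iff _).2 (mem_phi2_cmt p hh (inv_mem ha))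
  have h2 : h⁻¹ * a * h = cmt h a⁻¹ * a := by
    unfold cmt; group
  rw [h2, map_mul, h1, one_mul]

instance MsubComm (p : ℕ) : CommGroup ↥(Msub p G) :=
  { (inferInstance : Group ↥(Msub p G)) with
    mul_comm := by
      rintro ⟨a, ha⟩ ⟨b, hb⟩
      obtain ⟨a', ha', rfl⟩ := Subgroup.mem_map.mp ha
      obtain ⟨b', hb', rfl⟩ := Subgroup.mem_map.mp hb
      exact Subtype.ext (pQ_comm ha' hb') }

theorem Msub_pow (p : ℕ) (m : ↥(Msub p G)) : m ^ p = 1 := by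
  obtain ⟨a', ha', h⟩ := Subgroup.mem_map.mp m.2
  apply Subtype.ext
  show ((m : G ⧸ phi2Sub p G)) ^ p = 1
  rw [← h]
  exact pQ_pow ha'

instance MsubMod (p : ℕ) [NeZero p] : Module (ZMod p) (Additive ↥(Msub p G)) :=
  AddCommGroup.zmodModule (by
    intro m
    calc p • m = Additive.ofMul (m.toMul ^ p) := (ofMul_pow p m.toMul).symm
      _ = 0 := by rw [Msub_pow]; rfl)

instance MsubNormal (p : ℕ) : (Msub p G).Normal :=
  Subgroup.Normal.map (phiNormal p) _ (QuotientGroup.mk'_surjective _)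

def act (p : ℕ) (g : G) : ↥(Msub p G) →* ↥(Msub p G) where
  toFun m := ⟨(pQ p G g)⁻¹ * ↑m * pQ p G g, by
    simpa using (MsubNormal p).conj_mem ↑m m.2 (pQ p G g)⁻¹⟩
  map_one' := by
    apply Subtype.ext
    show (pQ p G g)⁻¹ * 1 * pQ p G g = 1
    group
  map_mul' a b := by
    apply Subtype.ext
    show (pQ p G g)⁻¹ * (↑a * ↑b) * pQ p G g =
      ((pQ p G g)⁻¹ * ↑a * pQ p G g) * ((pQ p G g)⁻¹ * ↑b * pQ p G g)
    group

theorem act_coe (p : ℕ) (g : G) (m : ↥(Msub p G)) :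
    (↑(act p g m) : G ⧸ phi2Sub p G) = (pQ p G g)⁻¹ * ↑m * pQ p G g := rfl

theorem act_mul (p : ℕ) (g h : G) : act p (g * h) = (act p h).comp (act (G := G) p g) := by
  apply MonoidHom.ext; intro m
  apply Subtype.ext
  show (pQ p G (g * h))⁻¹ * ↑m * pQ p G (g * h) =
    (pQ p G h)⁻¹ * ((pQ p G g)⁻¹ * ↑m * pQ p G g) * pQ p G h
  rw [map_mul]
  group

theorem act_phi (p : ℕ) {h : G} (hh : h ∈ phiSub p G) : act p h = MonoidHom.id ↥(Msub p G) := by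
  apply MonoidHom.ext; intro m
  obtain ⟨a, ha, hEq⟩ := Subgroup.mem_map.mp m.2
  apply Subtype.ext
  show (pQ p G h)⁻¹ * ↑m * pQ p G h = ↑m
  rw [← hEq, ← map_inv, ← map_mul, ← map_mul]
  exact pQ_conj hh ha

variable (p : ℕ) [NeZero p]

def actL (g : G) : Module.End (ZMod p) (Additive ↥(Msub p G)) :=
  (MonoidHom.toAdditive (act p g)).toZModLinearMap p

theorem actL_apply (g : G) (m : ↥(Msub p G)) :
    actL p g (Additive.ofMul m) = Additive.ofMul (act p g m) := rfl

theorem actL_mul (g h : G) : actL p (g * h) = actL p h * actL (G := G) p g := by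
  refine LinearMap.ext fun m => ?_
  rw [Module.End.mul_apply]
  change Additive.ofMul (act p (g * h) m.toMul) = Additive.ofMul (act p h (act p g m.toMul))
  rw [act_mul]
  rfl

theorem actL_phi {h : G} (hh : h ∈ phiSub p G) : actL p h = 1 := by
  refine LinearMap.ext fun m => ?_
  change Additive.ofMul (act p h m.toMul) = m
  rw [act_phi p hh]
  rfl

theorem actL_pow (g : G) (n : ℕ) : actL p g ^ n = actL p (g ^ n) := by
  induction n with
  | zero => rw [pow_zero, pow_zero]; exact (actL_phi p (one_mem _)).symm
  | succ n ih => rw [pow_succ, ih, ← actL_mul, ← pow_succ']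

theorem actL_commute (x y : G) : Commute (actL p x) (actL p y) := by
  have hxy : x * y = (y * x) * cmt x y := by unfold cmt; group
  show actL p x * actL p y = actL p y * actL p x
  have h1 : actL p x * actL p y = actL p (y * x) := (actL_mul p y x).symm
  have h2 : actL p y * actL p x = actL p (x * y) := (actL_mul p x y).symm
  rw [h1, h2, hxy, actL_mul p (y * x) (cmt x y), actL_phi p (mem_phi_cmt p x y), one_mul]

theorem actL_pow_p (x : G) : actL p x ^ p = 1 := by
  rw [actL_pow]; exact actL_phi p (mem_phi_pow p x)

end Stmt12Aux
namespace Stmt12Aux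

open Polynomial

theorem polyPow (p : ℕ) [Fact p.Prime] :
    ((X : (ZMod p)[X]) - 1) ^ p = X ^ p - 1 := by
  have := sub_pow_char (R := (ZMod p)[X]) (p := p) X 1
  simpa using this

theorem polyGeom (p : ℕ) [Fact p.Prime] :
    ((X : (ZMod p)[X]) - 1) ^ (p - 1) = ∑ i ∈ Finset.range p, X ^ i := by
  have hp : 0 < p := (Fact.out : p.Prime).pos
  have hne : ((X : (ZMod p)[X]) - 1) ≠ 0 := by
    have : ((X : (ZMod p)[X]) - 1) = X - C 1 := by rw [C_1]
    rw [this]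
    exact X_sub_C_ne_zero 1
  refine mul_right_cancel₀ hne ?_
  rw [geom_sum_mul, ← pow_succ, Nat.sub_add_cancel hp, polyPow]

theorem polyCoeffs (p : ℕ) [Fact p.Prime] :
    ((X : (ZMod p)[X]) - 1) ^ (p - 1) =
      ∑ i ∈ Finset.range p, ((sgnBinom p i : ℤ) : (ZMod p)[X]) * X ^ i := by
  have hp : 0 < p := (Fact.out : p.Prime).pos
  rw [sub_pow, Nat.sub_add_cancel hp]
  refine Finset.sum_congr rfl fun i hi => ?_
  have hi' : i < p := Finset.mem_range.mp hi
  have hsg : (-1 : (ZMod p)[X]) ^ (i + (p - 1)) = (-1) ^ (p - 1 - i) := by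
    have h2 : i + (p - 1) = (p - 1 - i) + 2 * i := by omega
    rw [h2, pow_add, pow_mul, neg_one_sq, one_pow, mul_one]
  rw [hsg]
  unfold sgnBinom
  push_cast
  ring

variable {G : Type*} [Group G]

theorem conj_prod (x c : G) (n : ℕ) :
    (x * c) ^ n =
      x ^ n * (((List.range n).reverse).map (fun i => (x ^ i)⁻¹ * c * x ^ i)).prod := by
  induction n with
  | zero => simp
  | succ n ih =>
    rw [pow_succ' (x * c), ih, List.range_succ, List.reverse_append]
    simp only [List.reverse_cons, List.reverse_nil, List.nil_append, List.singleton_append,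
      List.map_cons, List.prod_cons]
    group

theorem rel1 (p : ℕ) (x y : G) :
    y⁻¹ * x ^ p * y =
      x ^ p * (((List.range p).reverse).map (fun i => (x ^ i)⁻¹ * cmt x y * x ^ i)).prod := by
  have h1 : y⁻¹ * x ^ p * y = (y⁻¹ * x * y) ^ p := by
    have := conj_pow (i := p) (a := y⁻¹) (b := x)
    simpa using this.symm
  have h2 : y⁻¹ * x * y = x * cmt x y := by unfold cmt; group
  rw [h1, h2, conj_prod]

theorem list_prod_range {M : Type*} [CommMonoid M] (f : ℕ → M) (n : ℕ) :
    ((List.range n).map f).prod = ∏ i ∈ Finset.range n, f i := by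
  induction n with
  | zero => simp
  | succ n ih =>
    rw [List.range_succ, Finset.prod_range_succ, List.map_append, List.prod_append, ih]
    simp

end Stmt12Aux
namespace Stmt12Aux

open Polynomial

section EndAlg

variable (p : ℕ) [Fact p.Prime] {A : Type*} [Ring A] [Algebra (ZMod p) A]

theorem endPow (a : A) : (a - 1) ^ p = a ^ p - 1 := by
  have := congrArg (Polynomial.aeval a) (polyPow p)
  simpa [map_sub, map_pow] using this

theorem endGeom (a : A) : (a - 1) ^ (p - 1) = ∑ i ∈ Finset.range p, a ^ i := by
  have := congrArg (Polynomial.aeval a) (polyGeom p)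
  simpa [map_sub, map_pow, map_sum] using this

theorem endCoeffs (a : A) :
    (a - 1) ^ (p - 1) =
      ∑ i ∈ Finset.range p, ((sgnBinom p i : ℤ) : A) * a ^ i := by
  have := congrArg (Polynomial.aeval a) (polyCoeffs p)
  simpa [map_sub, map_pow, map_sum, map_mul, map_intCast] using this

end EndAlg

end Stmt12Aux

open Stmt12Aux

/-- The relation `(x,y) · X^{p-1} · Y^{p-1} = 0` in the module `Φ(G)/Φ²(G)`, written
multiplicatively: the product `∏_{i<p} ∏_{j<p} ((x,y)^{x^i y^j})^{c_i c_j}` lies in `Φ²(G)`,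
where `c_i = (-1)^{p-1-i} C(p-1,i)` are the coefficients of `(t-1)^{p-1}`. -/
theorem stmt12 (p : ℕ) [Fact p.Prime] {G : Type*} [Group G] (x y : G) :
    (((List.range p).map (fun i =>
        (((List.range p).map (fun j =>
          (cnj (cmt x y) (x ^ i * y ^ j)) ^ (sgnBinom p i * sgnBinom p j))).prod))).prod)
      ∈ phi2Sub p G := by
  classical
  haveI : NeZero p := ⟨(Fact.out : p.Prime).ne_zero⟩
  have hp1 : p - 1 + 1 = p := Nat.sub_add_cancel (Fact.out : p.Prime).pos
  set Q := G ⧸ phi2Sub p G with hQ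
  set c : G := cmt x y with hc
  have hcb : pQ p G c ∈ Msub p G := Subgroup.mem_map.mpr ⟨c, mem_phi_cmt p x y, rfl⟩
  have hm0 : pQ p G (x ^ p) ∈ Msub p G := Subgroup.mem_map.mpr ⟨x ^ p, mem_phi_pow p x, rfl⟩
  set cb : ↥(Msub p G) := ⟨pQ p G c, hcb⟩ with hcbdef
  set m0 : ↥(Msub p G) := ⟨pQ p G (x ^ p), hm0⟩ with hm0def
  set ξ : Module.End (ZMod p) (Additive ↥(Msub p G)) := actL (G := G) p x with hξ
  set η : Module.End (ZMod p) (Additive ↥(Msub p G)) := actL (G := G) p y with hη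
  set ca : Additive ↥(Msub p G) := Additive.ofMul cb with hca
  set a0 : Additive ↥(Msub p G) := Additive.ofMul m0 with ha0
  set F : ℕ → ℕ → ↥(Msub p G) :=
    fun i j => (act p (x ^ i * y ^ j) cb) ^ (sgnBinom p i * sgnBinom p j) with hF
  rw [← QuotientGroup.eq_one_iff]
  -- Step 1 : the image of the big product in the quotient is the coercion of a product in M
  have hco : (QuotientGroup.mk' (phi2Sub p G)) (((List.range p).map (fun i =>
        (((List.range p).map (fun j =>
          (cnj (cmt x y) (x ^ i * y ^ j)) ^ (sgnBinom p i * sgnBinom p j))).prod))).prod)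
      = ((Msub p G).subtype (((List.range p).map
          (fun i => ((List.range p).map (F i)).prod)).prod)) := by
    rw [MonoidHom.map_list_prod, MonoidHom.map_list_prod, List.map_map, List.map_map]
    refine congrArg List.prod (List.map_congr_left fun i _ => ?_)
    show (QuotientGroup.mk' (phi2Sub p G)) _ = (Msub p G).subtype _
    rw [MonoidHom.map_list_prod, MonoidHom.map_list_prod, List.map_map, List.map_map]
    refine congrArg List.prod (List.map_congr_left fun j _ => ?_)
    show (QuotientGroup.mk' (phi2Sub p G)) _ = (Msub p G).subtype _
    rw [map_zpow, map_zpow]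
    congr 1
  show (QuotientGroup.mk' (phi2Sub p G)) _ = 1
  rw [hco]
  suffices h1 : (((List.range p).map (fun i => ((List.range p).map (F i)).prod)).prod)
      = (1 : ↥(Msub p G)) by rw [h1, map_one]
  -- pass to the additive module
  apply Additive.ofMul.injective
  show Additive.ofMul _ = Additive.ofMul (1 : ↥(Msub p G))
  rw [ofMul_one]
  -- per-term identification
  have hterm : ∀ i j : ℕ, Additive.ofMul (F i j)
      = (sgnBinom p i * sgnBinom p j) • (η ^ j) ((ξ ^ i) ca) := by
    intro i j
    show Additive.ofMul ((act p (x ^ i * y ^ j) cb) ^ (sgnBinom p i * sgnBinom p j)) = _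
    rw [ofMul_zpow]
    congr 1
    have h1 : act p (x ^ i * y ^ j) cb = act p (y ^ j) (act p (x ^ i) cb) := by
      rw [act_mul]; rfl
    rw [h1, ← actL_apply, ← actL_apply, ← actL_pow, ← actL_pow]
  have e1 : Additive.ofMul (((List.range p).map
        (fun i => ((List.range p).map (F i)).prod)).prod)
      = ∑ i ∈ Finset.range p, ∑ j ∈ Finset.range p,
          (sgnBinom p i * sgnBinom p j) • (η ^ j) ((ξ ^ i) ca) := by
    rw [list_prod_range]
    rw [Finset.prod_congr rfl (fun i _ => list_prod_range (F i) p), ofMul_prod]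
    refine Finset.sum_congr rfl fun i _ => ?_
    rw [ofMul_prod]
    exact Finset.sum_congr rfl fun j _ => hterm i j
  rw [e1]
  -- the coefficient sums are evaluations of (f-1)^(p-1)
  have hsumEq : ∀ (f : Module.End (ZMod p) (Additive ↥(Msub p G)))
      (v : Additive ↥(Msub p G)),
      ∑ j ∈ Finset.range p, sgnBinom p j • (f ^ j) v = ((f - 1) ^ (p - 1)) v := by
    intro f v
    rw [endCoeffs p f, LinearMap.sum_apply]
    exact Finset.sum_congr rfl fun j _ => by
      rw [Module.End.mul_apply, Module.End.intCast_apply]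
  -- the key relation : sum of ξ^i on ca equals (η - 1) a0
  have hLM : act p y m0 =
      m0 * ((((List.range p).reverse).map (fun i => act p (x ^ i) cb)).prod) := by
    apply Subtype.ext
    show (pQ p G y)⁻¹ * (↑m0 : Q) * pQ p G y = _
    have l1 : (pQ p G y)⁻¹ * (↑m0 : Q) * pQ p G y = pQ p G (y⁻¹ * x ^ p * y) := by
      rw [map_mul, map_mul, map_inv]
    rw [l1, rel1 p x y, map_mul]
    show _ = (↑m0 : Q) * (Msub p G).subtype _
    rw [MonoidHom.map_list_prod, MonoidHom.map_list_prod, List.map_map, List.map_map]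
    congr 1
  have h2 : η a0 = a0 +
      Additive.ofMul ((((List.range p).reverse).map (fun i => act p (x ^ i) cb)).prod) := by
    show Additive.ofMul (act p y m0) = _
    rw [hLM, ofMul_mul]
  have h3 : Additive.ofMul ((((List.range p).reverse).map (fun i => act p (x ^ i) cb)).prod)
      = ∑ i ∈ Finset.range p, (ξ ^ i) ca := by
    rw [List.map_reverse, List.prod_reverse, list_prod_range, ofMul_prod]
    refine Finset.sum_congr rfl fun i _ => ?_
    rw [← actL_apply, ← actL_pow]
  have hrel : ∑ i ∈ Finset.range p, (ξ ^ i) ca = (η - 1) a0 := by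
    rw [← h3, LinearMap.sub_apply, Module.End.one_apply, h2, add_sub_cancel_left]
  -- final computation
  calc ∑ i ∈ Finset.range p, ∑ j ∈ Finset.range p,
        (sgnBinom p i * sgnBinom p j) • (η ^ j) ((ξ ^ i) ca)
      = ∑ i ∈ Finset.range p, sgnBinom p i • (((η - 1) ^ (p - 1)) ((ξ ^ i) ca)) := by
        refine Finset.sum_congr rfl fun i _ => ?_
        rw [← hsumEq η ((ξ ^ i) ca), Finset.smul_sum]
        exact Finset.sum_congr rfl fun j _ => mul_smul _ _ _
    _ = ((η - 1) ^ (p - 1)) (∑ i ∈ Finset.range p, sgnBinom p i • ((ξ ^ i) ca)) := by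
        rw [map_sum]
        exact Finset.sum_congr rfl fun i _ => (map_zsmul ((η - 1) ^ (p - 1)) _ _).symm
    _ = ((η - 1) ^ (p - 1)) (((ξ - 1) ^ (p - 1)) ca) := by rw [hsumEq ξ ca]
    _ = ((η - 1) ^ (p - 1)) ((∑ i ∈ Finset.range p, ξ ^ i) ca) := by rw [endGeom p ξ]
    _ = ((η - 1) ^ (p - 1)) (∑ i ∈ Finset.range p, (ξ ^ i) ca) := by
        rw [LinearMap.sum_apply]
    _ = ((η - 1) ^ (p - 1)) ((η - 1) a0) := by rw [hrel]
    _ = (((η - 1) ^ (p - 1)) * (η - 1)) a0 := by rw [Module.End.mul_apply]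
    _ = ((η - 1) ^ p) a0 := by rw [← pow_succ, hp1]
    _ = (η ^ p - 1) a0 := by rw [endPow p η]
    _ = 0 := by
        rw [hη, actL_pow_p p y, sub_self, LinearMap.zero_apply]
end
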